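/- Let G be a 2-connected graph with n vertices and let v be a vertex of G. Let C be a set of i ≤ n−2 vertices of G with v ∉ C such that both induced subgraphs G[C] and G[V(G)∖C] are connected. Then there exists a vertex u ∈ V(G)∖(C ∪ {v}) such that both G[C ∪ {u}] and G[V(G)∖(C ∪ {u})] are connected. -/

import Mathlib

open SimpleGraph

/-- A graph is 2-connected: it has at least 3 vertices and removing any single
vertex leaves a connected graph. -/
def TwoConnected {V : Type*} [Fintype V] (G : SimpleGraph V) : Prop :=
  3 ≤ Fintype.card V ∧ ∀ v : V, (G.induce ({v}ᶜ : Set V)).Connected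

section Aux

variable {V : Type*} {G : SimpleGraph V}

/-- Inclusion homomorphism between induced subgraphs. -/
def auxHomLE {s t : Set V} (h : s ⊆ t) : G.induce s →g G.induce t :=
  ⟨Set.inclusion h, fun ha => ha⟩

/-- Value homomorphism from an induced subgraph. -/
def auxHomVal (s : Set V) : G.induce s →g G :=
  ⟨Subtype.val, fun ha => ha⟩

lemma aux_reach_of_walk {s : Set V} : ∀ {a b : V} (W : G.Walk a b),
    (∀ x ∈ W.support, x ∈ s) → ∀ (ha : a ∈ s) (hb : b ∈ s),
    (G.induce s).Reachable ⟨a, ha⟩ ⟨b, hb⟩ := by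
  intro a b W
  induction W with
  | nil => intro _ ha hb; exact Reachable.refl _
  | @cons x y z h p ih =>
      intro hs hx hz
      have hy : y ∈ s := hs y (by simp)
      have hr := ih (fun q hq => hs q (by simp [hq])) hy hz
      exact (SimpleGraph.Adj.reachable
        (show (G.induce s).Adj ⟨x, hx⟩ ⟨y, hy⟩ from h)).trans hr

lemma aux_walk_of_reach {s : Set V} {a b : s} (h : (G.induce s).Reachable a b) :
    ∃ W : G.Walk a.1 b.1, ∀ x ∈ W.support, x ∈ s := by
  obtain ⟨W⟩ := h
  refine ⟨W.map (auxHomVal s), ?_⟩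
  intro x hx
  have hx' : x ∈ (W.map (auxHomVal s)).support := hx
  rw [SimpleGraph.Walk.support_map] at hx'
  simp only [List.mem_map] at hx'
  have hx := hx'
  obtain ⟨y, _, rfl⟩ := hx
  exact y.2

lemma aux_cross {C : Set V} {v : V} : ∀ {a b : V} (W : G.Walk a b),
    (∀ x ∈ W.support, x ≠ v) → a ∉ C → b ∈ C →
    ∃ z, z ∉ C ∧ z ≠ v ∧ ∃ c ∈ C, G.Adj z c := by
  intro a b W
  induction W with
  | nil => intro _ ha hb; exact absurd hb ha
  | @cons x y z h p ih =>
      intro hsup hx hz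
      by_cases hy : y ∈ C
      · exact ⟨x, hx, hsup x (by simp), y, hy, h⟩
      · exact ih (fun q hq => hsup q (by simp [hq])) hy hz

lemma aux_lemA {C E : Set V} {u : V} (hE : ∀ x, x ∈ E ↔ x ∉ C ∧ x ≠ u) :
    ∀ {a b : V} (W : G.Walk a b), (∀ y ∈ W.support, y ≠ u) →
    ∀ (hb : b ∈ E) (ha : a ∈ E),
    (G.induce E).Reachable ⟨a, ha⟩ ⟨b, hb⟩ ∨
      ∃ z, ∃ hz : z ∈ E, z ≠ b ∧ (∃ c ∈ C, G.Adj z c) ∧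
        (G.induce E).Reachable ⟨a, ha⟩ ⟨z, hz⟩ := by
  intro a b W
  induction W with
  | nil => intro _ hb ha; exact Or.inl (Reachable.refl _)
  | @cons x y w h p ih =>
      intro hsup hb hx
      by_cases hxw : x = w
      · subst hxw; exact Or.inl (Reachable.refl _)
      · by_cases hyC : y ∈ C
        · exact Or.inr ⟨x, hx, hxw, ⟨y, hyC, h⟩, Reachable.refl _⟩
        · have hyu : y ≠ u := hsup y (by simp)
          have hyE : y ∈ E := (hE y).2 ⟨hyC, hyu⟩
          have step : (G.induce E).Adj ⟨x, hx⟩ ⟨y, hyE⟩ := h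
          rcases ih (fun q hq => hsup q (by simp [hq])) hb hyE with hr | ⟨z, hz, hzw, hzc, hr⟩
          · exact Or.inl (step.reachable.trans hr)
          · exact Or.inr ⟨z, hz, hzw, hzc, step.reachable.trans hr⟩

end Aux

theorem stmt0 {V : Type*} [Fintype V] (G : SimpleGraph V)
    (h2 : TwoConnected G) (v : V) (C : Set V) (hvC : v ∉ C)
    (hcard : C.ncard ≤ Fintype.card V - 2)
    (hC : (G.induce C).Preconnected)
    (hCc : (G.induce (Cᶜ : Set V)).Preconnected) :
    ∃ u : V, u ∉ C ∧ u ≠ v ∧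
      (G.induce ((C ∪ {u}) : Set V)).Preconnected ∧
      (G.induce (((C ∪ {u})ᶜ) : Set V)).Preconnected := by
  classical
  obtain ⟨hcard3, hconn⟩ := h2
  rcases Set.eq_empty_or_nonempty C with hCe | hCne
  · -- C empty
    subst hCe
    obtain ⟨u, hu⟩ := Fintype.exists_ne_of_one_lt_card (by omega) v
    refine ⟨u, by simp, hu, ?_, ?_⟩
    · rw [Set.empty_union]
      intro a b
      have hab : a = b := Subtype.ext (by
        have ha := a.2; have hb := b.2
        simp only [Set.mem_singleton_iff] at ha hb
        rw [ha, hb])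
      exact hab ▸ Reachable.refl _
    · rw [Set.empty_union]
      exact (hconn u).preconnected
  · -- C nonempty
    have hncard : 1 < (Cᶜ : Set V).ncard := by
      have h := Set.ncard_add_ncard_compl C (Set.toFinite C) (Set.toFinite Cᶜ)
      rw [Nat.card_eq_fintype_card] at h
      omega
    obtain ⟨d₀, hd₀D, hd₀v⟩ := Set.exists_ne_of_one_lt_ncard hncard v
    obtain ⟨c₀, hc₀⟩ := hCne
    have hc₀v : c₀ ≠ v := fun h => hvC (h ▸ hc₀)
    have hr0 := (hconn v).preconnected ⟨d₀, by simp [hd₀v]⟩ ⟨c₀, by simp [hc₀v]⟩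
    obtain ⟨W0, hW0⟩ := aux_walk_of_reach hr0
    have hSne : ∃ z, z ∉ C ∧ z ≠ v ∧ ∃ c ∈ C, G.Adj z c :=
      aux_cross W0 (fun x hx => by simpa using hW0 x hx) hd₀D hc₀
    obtain ⟨z₀, hz₀⟩ := hSne
    have hvD : v ∈ (Cᶜ : Set V) := hvC
    set f : V → ℕ := fun w =>
      if h : w ∈ (Cᶜ : Set V) then (G.induce (Cᶜ : Set V)).dist ⟨v, hvD⟩ ⟨w, h⟩ else 0
      with hf
    obtain ⟨u, huS, hmax⟩ := Finset.exists_max_image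
      (Finset.univ.filter (fun z => z ∉ C ∧ z ≠ v ∧ ∃ c ∈ C, G.Adj z c)) f
      ⟨z₀, by simp [hz₀.1, hz₀.2.1, hz₀.2.2]⟩
    simp only [Finset.mem_filter, Finset.mem_univ, true_and] at huS
    obtain ⟨huC, huv, c, hcC, huc⟩ := huS
    have hvu : v ≠ u := fun h => huv h.symm
    have hE : ∀ x, x ∈ ((C ∪ {u})ᶜ : Set V) ↔ x ∉ C ∧ x ≠ u := by
      intro x; simp [not_or, and_comm]
    have hvE : v ∈ ((C ∪ {u})ᶜ : Set V) := (hE v).2 ⟨hvC, hvu⟩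
    have huD : u ∈ (Cᶜ : Set V) := huC
    refine ⟨u, huC, huv, ?_, ?_⟩
    · -- G[C ∪ {u}] preconnected
      have huCu : u ∈ (C ∪ {u} : Set V) := by simp
      have hkey : ∀ x (hx : x ∈ (C ∪ {u} : Set V)),
          (G.induce (C ∪ {u} : Set V)).Reachable ⟨x, hx⟩ ⟨u, huCu⟩ := by
        intro x hx
        rcases hx with hxC | hxu
        · have h1 := hC ⟨x, hxC⟩ ⟨c, hcC⟩
          have h2 := h1.map (auxHomLE (Set.subset_union_left) :
            G.induce C →g G.induce (C ∪ {u} : Set V))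
          have hadj : (G.induce (C ∪ {u} : Set V)).Adj ⟨c, Or.inl hcC⟩ ⟨u, huCu⟩ := huc.symm
          exact h2.trans hadj.reachable
        · have hxu' : x = u := hxu
          subst hxu'
          exact Reachable.refl _
      intro a b
      exact (hkey a.1 a.2).trans (hkey b.1 b.2).symm
    · -- G[(C ∪ {u})ᶜ] preconnected
      have key : ∀ x (hx : x ∈ ((C ∪ {u})ᶜ : Set V)),
          (G.induce ((C ∪ {u})ᶜ : Set V)).Reachable ⟨x, hx⟩ ⟨v, hvE⟩ := by
        intro x hx
        by_contra hnr
        have hxu : x ≠ u := ((hE x).1 hx).2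
        have hr := (hconn u).preconnected ⟨x, by simp [hxu]⟩ ⟨v, by simp [hvu]⟩
        obtain ⟨W, hW⟩ := aux_walk_of_reach hr
        rcases aux_lemA hE W (fun y hy => by simpa using hW y hy) hvE hx with
          h | ⟨z, hzE, hzv, ⟨c', hc'C, hzc'⟩, hrz⟩
        · exact hnr h
        · have hznr : ¬ (G.induce ((C ∪ {u})ᶜ : Set V)).Reachable ⟨z, hzE⟩ ⟨v, hvE⟩ :=
            fun h => hnr (hrz.trans h)
          have hzD : z ∈ (Cᶜ : Set V) := ((hE z).1 hzE).1
          have hzu : z ≠ u := ((hE z).1 hzE).2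
          obtain ⟨P, hP⟩ := (hCc ⟨v, hvD⟩ ⟨z, hzD⟩).exists_walk_length_eq_dist
          have huP : (⟨u, huD⟩ : (Cᶜ : Set V)) ∈ P.support := by
            by_contra huP
            apply hznr
            refine (aux_reach_of_walk (P.map (auxHomVal (Cᶜ : Set V))) ?_ hvE hzE).symm
            intro q hq
            rw [SimpleGraph.Walk.support_map] at hq
            simp only [List.mem_map] at hq
            obtain ⟨y, hy, rfl⟩ := hq
            refine (hE _).2 ⟨y.2, ?_⟩
            intro h
            exact huP (by rw [show y = ⟨u, huD⟩ from Subtype.ext h] at hy; exact hy)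
          have hsplit := congrArg SimpleGraph.Walk.length (P.take_spec huP)
          rw [SimpleGraph.Walk.length_append] at hsplit
          have h1 : (G.induce (Cᶜ : Set V)).dist ⟨v, hvD⟩ ⟨u, huD⟩ ≤
              (P.takeUntil _ huP).length := SimpleGraph.dist_le _
          have h2 : 1 ≤ (P.dropUntil _ huP).length := by
            rcases Nat.eq_zero_or_pos (P.dropUntil _ huP).length with h0 | h
            · have heq := SimpleGraph.Walk.eq_of_length_eq_zero h0
              exact absurd (congrArg Subtype.val heq) hzu.symm
            · exact h
          have hmz : f z ≤ f u := hmax z (by simp [hzD, hzv, hc'C, hzc']; exact ⟨hzD, c', hc'C, hzc'⟩)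
          have hfz : f z = (G.induce (Cᶜ : Set V)).dist ⟨v, hvD⟩ ⟨z, hzD⟩ := dif_pos hzD
          have hfu : f u = (G.induce (Cᶜ : Set V)).dist ⟨v, hvD⟩ ⟨u, huD⟩ := dif_pos huD
          rw [hfz, hfu] at hmz
          omega
      intro a b
      exact (key a.1 a.2).trans (key b.1 b.2).symm
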